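/- Let n ≥ 3, K ≥ 1, ε > 0, and 0 < s ≤ n−2. Let (f, g) be a K-cinematic pair of maps ℝ^{n−2} → ℝ^{n−1} on [0,1]^{n−2}, set d := ‖f − g‖_{C²([0,1]^{n−2})}, and let δ satisfy 0 < δ ≤ d. Let X_f ⊂ [0,1]^{n−2} be a finite (δ, s, δ^{−ε})-set with #X_f ≤ δ^{−s}, and let X_g ⊂ [0,1]^{n−2} be any nonempty set. Define E(f) := {(x, f(x)) : x ∈ X_f} and E(g) := {(x, g(x)) : x ∈ X_g}, and let E^δ(f), E^δ(g) denote their open δ-neighbourhoods in ℝ^{2n−3}. Then L^{2n−3}( E^δ(f) ∩ E^δ(g) ) ≤ C(n,K) · δ^{−ε} · δ^{2n−3} / d^{s}, where C(n,K) depends only on n and K and L^{2n−3} is Lebesgue measure. -/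

import Mathlib

open MeasureTheory Set
open scoped ENNReal NNReal

/-- The unit cube `[0,1]^m` in `ℝ^m`. -/
def unitCube (m : ℕ) : Set (EuclideanSpace ℝ (Fin m)) :=
  {x | ∀ i, x i ∈ Set.Icc (0:ℝ) 1}

/-- The `C²` norm of a map on a subset: `sup_{x ∈ D} max(|h x|, ‖Dh x‖, ‖D²h x‖)`. -/
noncomputable def C2NormOn {m l : ℕ}
    (h : EuclideanSpace ℝ (Fin m) → EuclideanSpace ℝ (Fin l))
    (D : Set (EuclideanSpace ℝ (Fin m))) : ℝ :=
  ⨆ x ∈ D, max ‖h x‖ (max ‖fderiv ℝ h x‖ ‖fderiv ℝ (fderiv ℝ h) x‖)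

/-- A `K`-cinematic pair of maps on `[0,1]^m`. -/
def CinematicPair {m l : ℕ} (K : ℝ)
    (f g : EuclideanSpace ℝ (Fin m) → EuclideanSpace ℝ (Fin l)) : Prop :=
  ContDiff ℝ 2 f ∧ ContDiff ℝ 2 g ∧
  C2NormOn f (unitCube m) ≤ K ∧ C2NormOn g (unitCube m) ≤ K ∧
  ∀ x ∈ unitCube m, ∀ ξ : EuclideanSpace ℝ (Fin m), ‖ξ‖ = 1 →
    K⁻¹ * C2NormOn (f - g) (unitCube m) ≤ ‖f x - g x‖ + ‖fderiv ℝ f x ξ - fderiv ℝ g x ξ‖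

/-- The vertical `η`-neighbourhood of the graph of `f` over `D`. -/
def vertNbhd {m l : ℕ} (f : EuclideanSpace ℝ (Fin m) → EuclideanSpace ℝ (Fin l))
    (D : Set (EuclideanSpace ℝ (Fin m))) (η : ℝ) :
    Set (EuclideanSpace ℝ (Fin m) × EuclideanSpace ℝ (Fin l)) :=
  {p | p.1 ∈ D ∧ ‖p.2 - f p.1‖ < η}

/-- A finite `(δ, s, C)`-set in a metric space: every ball of radius `r ≥ δ` contains at
most `C · r^s · #A` points of `A`. -/
def IsDeltaSet {α : Type*} [PseudoMetricSpace α] (δ s C : ℝ) (A : Set α) : Prop :=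
  ∀ (x : α) (r : ℝ), δ ≤ r →
    ((A ∩ Metric.closedBall x r).ncard : ℝ) ≤ C * r ^ s * A.ncard

/-- The open Euclidean `δ`-neighbourhood of a set in `ℝ^m × ℝ^l ≅ ℝ^{m+l}`. -/
def euclNbhd {m l : ℕ}
    (A : Set (EuclideanSpace ℝ (Fin m) × EuclideanSpace ℝ (Fin l))) (δ : ℝ) :
    Set (EuclideanSpace ℝ (Fin m) × EuclideanSpace ℝ (Fin l)) :=
  {p | ∃ q ∈ A, Real.sqrt (‖p.1 - q.1‖ ^ 2 + ‖p.2 - q.2‖ ^ 2) < δ}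


section AuxLemmas

lemma unitCube_convex (m : ℕ) : Convex ℝ (unitCube m) := by
  intro x hx y hy a b ha hb hab i
  have hx' := hx i; have hy' := hy i
  have h1 : (a • x + b • y) i = a * x i + b * y i := rfl
  rw [h1]
  constructor
  · nlinarith [hx'.1, hy'.1]
  · nlinarith [hx'.1, hx'.2, hy'.1, hy'.2]

lemma unitCube_isCompact (m : ℕ) : IsCompact (unitCube m) := by
  have h : unitCube m = ⇑(EuclideanSpace.equiv (Fin m) ℝ) ⁻¹'
      (Set.univ.pi fun _ => Set.Icc (0:ℝ) 1) := by
    ext x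
    rw [Set.mem_preimage, Set.mem_univ_pi]
    exact ⟨fun hx i => hx i, fun hx i => hx i⟩
  rw [h]
  exact (EuclideanSpace.equiv (Fin m) ℝ).toHomeomorph.isCompact_preimage.mpr
    (isCompact_univ_pi fun _ => isCompact_Icc)

lemma norm_le_c2 {m l : ℕ} {h : EuclideanSpace ℝ (Fin m) → EuclideanSpace ℝ (Fin l)}
    (hh : ContDiff ℝ 2 h) {x : EuclideanSpace ℝ (Fin m)} (hx : x ∈ unitCube m) :
    max ‖h x‖ (max ‖fderiv ℝ h x‖ ‖fderiv ℝ (fderiv ℝ h) x‖) ≤ C2NormOn h (unitCube m) := by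
  set F := fun y : EuclideanSpace ℝ (Fin m) =>
    max ‖h y‖ (max ‖fderiv ℝ h y‖ ‖fderiv ℝ (fderiv ℝ h) y‖) with hF
  have hc : Continuous F := by
    have h1 : Continuous h := hh.continuous
    have h2 : Continuous (fderiv ℝ h) := hh.continuous_fderiv (by norm_num)
    have h3 : Continuous (fderiv ℝ (fderiv ℝ h)) :=
      (hh.fderiv_right (m := 1) (by norm_num)).continuous_fderiv (by norm_num)
    exact (h1.norm).max ((h2.norm).max (Continuous.norm (E := EuclideanSpace ℝ (Fin m) →L[ℝ] EuclideanSpace ℝ (Fin m) →L[ℝ] EuclideanSpace ℝ (Fin l)) h3))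
  obtain ⟨b, hb⟩ := (unitCube_isCompact m).bddAbove_image hc.continuousOn
  have hbdd : BddAbove (Set.range fun y => ⨆ _ : y ∈ unitCube m, F y) := by
    refine ⟨max b 0, ?_⟩
    rintro - ⟨y, rfl⟩
    by_cases hy : y ∈ unitCube m
    · show (⨆ _ : y ∈ unitCube m, F y) ≤ max b 0
      rw [ciSup_pos (f := fun _ => F y) hy]; exact le_max_of_le_left (hb ⟨y, hy, rfl⟩)
    · show (⨆ _ : y ∈ unitCube m, F y) ≤ max b 0
      haveI : IsEmpty (y ∈ unitCube m) := ⟨fun hc => hy hc⟩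
      rw [Real.iSup_of_isEmpty]; exact le_max_right _ _
  calc F x = ⨆ _ : x ∈ unitCube m, F x := (ciSup_pos (f := fun _ => F x) hx).symm
    _ ≤ C2NormOn h (unitCube m) := le_ciSup hbdd x

lemma taylor_bound {m l : ℕ} {h : EuclideanSpace ℝ (Fin m) → EuclideanSpace ℝ (Fin l)}
    (hh : ContDiff ℝ 2 h) {M : ℝ}
    (hM : ∀ z ∈ unitCube m, ‖fderiv ℝ (fderiv ℝ h) z‖ ≤ M)
    {x y : EuclideanSpace ℝ (Fin m)} (hx : x ∈ unitCube m) (hy : y ∈ unitCube m) :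
    ‖h y - h x - fderiv ℝ h x (y - x)‖ ≤ M * ‖y - x‖ ^ 2 := by
  have hM0 : 0 ≤ M := le_trans (by positivity) (hM x hx)
  have hdiff : Differentiable ℝ h := hh.differentiable (by norm_num)
  have hdiff' : Differentiable ℝ (fderiv ℝ h) :=
    (hh.fderiv_right (m := 1) (by norm_num)).differentiable (by norm_num)
  have hder : ∀ z ∈ unitCube m, ‖fderiv ℝ h z - fderiv ℝ h x‖ ≤ M * ‖z - x‖ :=
    fun z hz => Convex.norm_image_sub_le_of_norm_fderiv_le
      (fun w _ => hdiff'.differentiableAt) hM (unitCube_convex m) hx hz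
  set φ : EuclideanSpace ℝ (Fin m) → EuclideanSpace ℝ (Fin l) :=
    fun z => h z - fderiv ℝ h x z with hφ
  have hφdiff : ∀ z, DifferentiableAt ℝ φ z :=
    fun z => (hdiff z).sub (fderiv ℝ h x).differentiableAt
  have hφder : ∀ z, fderiv ℝ φ z = fderiv ℝ h z - fderiv ℝ h x := by
    intro z
    rw [hφ, fderiv_fun_sub (hdiff z) (fderiv ℝ h x).differentiableAt,
      (fderiv ℝ h x).fderiv]
  have hseg : segment ℝ x y ⊆ unitCube m := (unitCube_convex m).segment_subset hx hy
  have key : ‖φ y - φ x‖ ≤ (M * ‖y - x‖) * ‖y - x‖ := by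
    apply Convex.norm_image_sub_le_of_norm_fderiv_le (s := segment ℝ x y)
      (fun z _ => hφdiff z) ?_ (convex_segment x y)
      (left_mem_segment ℝ x y) (right_mem_segment ℝ x y)
    intro z hz
    rw [hφder z]
    refine le_trans (hder z (hseg hz)) (mul_le_mul_of_nonneg_left ?_ hM0)
    obtain ⟨a, b, ha, hb, hab, rfl⟩ := hz
    have hzz : a • x + b • y - x = b • (y - x) := by
      have : a = 1 - b := by linarith
      rw [this]; module
    rw [hzz, norm_smul, Real.norm_eq_abs, abs_of_nonneg hb]
    nlinarith [norm_nonneg (y - x)]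
  have hid : h y - h x - fderiv ℝ h x (y - x) = φ y - φ x := by
    rw [hφ]
    simp only [map_sub]
    abel
  rw [hid]
  calc ‖φ y - φ x‖ ≤ (M * ‖y - x‖) * ‖y - x‖ := key
    _ = M * ‖y - x‖ ^ 2 := by ring

lemma ball_volume_le (k : ℕ) (c : EuclideanSpace ℝ (Fin k)) {r : ℝ} (hr : 0 ≤ r) :
    volume (Metric.ball c r) ≤ ENNReal.ofReal ((2*r) ^ k) := by
  have h2r : (0:ℝ) ≤ 2*r := by linarith
  have hsub : Metric.ball c r ⊆ ⇑((MeasurableEquiv.toLp 2 (Fin k → ℝ)).symm) ⁻¹'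
      (Set.univ.pi fun i => Set.Icc (c i - r) (c i + r)) := by
    intro y hy
    rw [Set.mem_preimage, Set.mem_univ_pi]
    intro i
    have h1 : |y i - c i| ≤ ‖y - c‖ := by
      rw [EuclideanSpace.norm_eq, ← Real.sqrt_sq_eq_abs]
      apply Real.sqrt_le_sqrt
      have h0 : (y - c) i = y i - c i := rfl
      calc (y i - c i)^2 = ‖(y - c) i‖^2 := by rw [h0, Real.norm_eq_abs, sq_abs]
        _ ≤ ∑ j, ‖(y - c) j‖^2 :=
          Finset.single_le_sum (f := fun j => ‖(y - c) j‖^2)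
            (fun j _ => by positivity) (Finset.mem_univ i)
    have h2 : ‖y - c‖ < r := by rwa [← dist_eq_norm, ← Metric.mem_ball]
    have h3 := abs_le.mp (le_of_lt (lt_of_le_of_lt h1 h2))
    have h4 : ((MeasurableEquiv.toLp 2 (Fin k → ℝ)).symm) y i = y i := rfl
    rw [h4, Set.mem_Icc]
    constructor <;> linarith [h3.1, h3.2]
  calc volume (Metric.ball c r)
      ≤ volume (⇑((MeasurableEquiv.toLp 2 (Fin k → ℝ)).symm) ⁻¹'
        (Set.univ.pi fun i => Set.Icc (c i - r) (c i + r))) := measure_mono hsub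
    _ = volume (Set.univ.pi fun i => Set.Icc (c i - r) (c i + r)) :=
        (EuclideanSpace.volume_preserving_symm_measurableEquiv_toLp (Fin k)).measure_preimage
          (MeasurableSet.univ_pi fun i => measurableSet_Icc).nullMeasurableSet
    _ = ∏ i : Fin k, volume (Set.Icc (c i - r) (c i + r)) := volume_pi_pi _
    _ = ENNReal.ofReal ((2*r) ^ k) := by
        have heach : ∀ i : Fin k, volume (Set.Icc (c i - r) (c i + r)) = ENNReal.ofReal (2*r) := by
          intro i; rw [Real.volume_Icc]; congr 1; ring
        rw [Finset.prod_congr rfl (fun i _ => heach i), Finset.prod_const,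
          Finset.card_univ, Fintype.card_fin, ← ENNReal.ofReal_pow h2r]

lemma arith1 (K δ d : ℝ) (hK : 1 ≤ K) (hδ : 0 < δ) (hd4K : d ≤ 4*K^2) :
    δ * d ≤ 32*K^2*δ := by
  nlinarith [mul_le_mul_of_nonneg_left hd4K hδ.le, mul_nonneg (sq_nonneg K) hδ.le]

lemma arith_sep (K δ d t a b : ℝ) (hK : 1 ≤ K) (hδ : 0 < δ) (hd : 0 < d) (ht0 : 0 < t)
    (ha0 : 0 ≤ a) (hb0 : 0 ≤ b) (hmul : d ≤ K*a + K*b) (ha : a ≤ (2+2*K)*δ)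
    (htb : t*b ≤ (4+4*K)*δ + d*t^2) (htK : t*(4*K) ≤ 1) : t*d ≤ 32*K^2*δ := by
  have hK0 : (0:ℝ) < K := by linarith
  have e0 : t*d ≤ K*(t*a) + K*(t*b) := by
    calc t*d ≤ t*(K*a + K*b) := mul_le_mul_of_nonneg_left hmul ht0.le
      _ = K*(t*a) + K*(t*b) := by ring
  have e1 : K*(t*b) ≤ K*((4+4*K)*δ + d*t^2) := mul_le_mul_of_nonneg_left htb hK0.le
  have e2 : K*(d*t^2) ≤ (d*t)/4 := by
    nlinarith [mul_le_mul_of_nonneg_right htK (mul_nonneg hd.le ht0.le)]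
  have e3 : K*(t*a) ≤ K*δ := by
    nlinarith [mul_le_mul_of_nonneg_left ha (mul_nonneg hK0.le ht0.le),
      mul_le_mul_of_nonneg_right htK (mul_nonneg hK0.le hδ.le),
      mul_nonneg (mul_nonneg hK0.le ht0.le) hδ.le]
  nlinarith [e0, e1, e2, e3, hδ.le, mul_nonneg hK0.le hδ.le]

end AuxLemmas

set_option maxHeartbeats 2000000 in
/-- For a `K`-cinematic pair `(f,g)` with `d = ‖f−g‖_{C²}`, `0 < δ ≤ d`,
a finite `(δ,s,δ^{−ε})`-set `X_f ⊆ [0,1]^{n−2}` with `#X_f ≤ δ^{−s}`, and any nonempty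
`X_g ⊆ [0,1]^{n−2}`, the Euclidean `δ`-neighbourhoods of the graphs `E(f)`, `E(g)` satisfy
`L^{2n−3}(E^δ(f) ∩ E^δ(g)) ≤ C(n,K) δ^{−ε} δ^{2n−3} / d^s`. -/
theorem stmt11 (n : ℕ) (hn : 3 ≤ n) (K : ℝ) (hK : 1 ≤ K) :
    ∃ C : ℝ, 0 < C ∧
      ∀ ε s : ℝ, 0 < ε → 0 < s → s ≤ (n : ℝ) - 2 →
      ∀ f g : EuclideanSpace ℝ (Fin (n-2)) → EuclideanSpace ℝ (Fin (n-1)),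
        CinematicPair K f g →
        ∀ δ : ℝ, 0 < δ → δ ≤ C2NormOn (f - g) (unitCube (n-2)) →
        ∀ Xf Xg : Set (EuclideanSpace ℝ (Fin (n-2))),
          Xf.Finite → Xf ⊆ unitCube (n-2) →
          IsDeltaSet δ s (δ ^ (-ε)) Xf → (Xf.ncard : ℝ) ≤ δ ^ (-s) →
          Xg.Nonempty → Xg ⊆ unitCube (n-2) →
          volume (euclNbhd ((fun x => (x, f x)) '' Xf) δ ∩
                  euclNbhd ((fun x => (x, g x)) '' Xg) δ)
            ≤ ENNReal.ofReal
                (C * δ ^ (-ε) * δ ^ (2*n-3) /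
                  C2NormOn (f - g) (unitCube (n-2)) ^ s) := by
  classical
  have hK0 : (0:ℝ) < K := lt_of_lt_of_le one_pos hK
  have hsqn : (0:ℝ) ≤ Real.sqrt n := Real.sqrt_nonneg _
  have hbase1 : (1:ℝ) ≤ 4*K*Real.sqrt n + 2 := by nlinarith
  have hbase2 : (1:ℝ) ≤ 32*K^2 := by nlinarith
  refine ⟨2 ^ (2*n-3) * (4*K*Real.sqrt n + 2) ^ n * (32*K^2) ^ n,
    mul_pos (mul_pos (pow_pos two_pos _) (pow_pos (by linarith) _)) (pow_pos (by linarith) _), ?_⟩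
  intro ε s hε hs hsn f g hcin δ hδ hδd Xf Xg hXfFin hXfsub hXfDelta hXfCard hXgNe hXgsub
  obtain ⟨hf2, hg2, hfK, hgK, hlow⟩ := hcin
  set d := C2NormOn (f - g) (unitCube (n-2)) with hdd
  have hd : 0 < d := lt_of_lt_of_le hδ hδd
  by_cases hδ1 : δ ≤ 1
  swap
  · -- degenerate case δ > 1 : Xf is empty
    push_neg at hδ1
    have hXfe : Xf = ∅ := by
      have h1 : δ ^ (-s) < 1 := Real.rpow_lt_one_of_one_lt_of_neg hδ1 (by linarith)
      have h2 : (Xf.ncard : ℝ) < 1 := lt_of_le_of_lt hXfCard h1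
      have h3 : Xf.ncard = 0 := by exact_mod_cast Nat.lt_one_iff.mp (by exact_mod_cast h2)
      exact (Set.ncard_eq_zero hXfFin).mp h3
    have hemp : euclNbhd ((fun x => (x, f x)) '' Xf) δ = ∅ := by
      rw [hXfe]
      ext p; simp [euclNbhd]
    rw [hemp, Set.empty_inter, measure_empty]
    exact zero_le
  -- main case: δ ≤ 1
  have hn2 : 0 < n - 2 := by omega
  have hhd2 : ContDiff ℝ 2 (f - g) := hf2.sub hg2
  have hfd : Differentiable ℝ f := hf2.differentiable (by norm_num)
  have hgd : Differentiable ℝ g := hg2.differentiable (by norm_num)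
  have hDsub : ∀ x, fderiv ℝ (f - g) x = fderiv ℝ f x - fderiv ℝ g x :=
    fun x => fderiv_sub (hfd x) (hgd x)
  have hfKp : ∀ x ∈ unitCube (n-2), ‖f x‖ ≤ K :=
    fun x hx => le_trans (le_trans (le_max_left _ _) (norm_le_c2 hf2 hx)) hfK
  have hgKp : ∀ x ∈ unitCube (n-2), ‖g x‖ ≤ K :=
    fun x hx => le_trans (le_trans (le_max_left _ _) (norm_le_c2 hg2 hx)) hgK
  have hfK' : ∀ x ∈ unitCube (n-2), ‖fderiv ℝ f x‖ ≤ K :=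
    fun x hx => le_trans (le_trans (le_trans (le_max_left _ _) (le_max_right _ _))
      (norm_le_c2 hf2 hx)) hfK
  have hgK' : ∀ x ∈ unitCube (n-2), ‖fderiv ℝ g x‖ ≤ K :=
    fun x hx => le_trans (le_trans (le_trans (le_max_left _ _) (le_max_right _ _))
      (norm_le_c2 hg2 hx)) hgK
  have hgLip : ∀ x ∈ unitCube (n-2), ∀ y ∈ unitCube (n-2), ‖g y - g x‖ ≤ K * ‖y - x‖ :=
    fun x hx y hy => Convex.norm_image_sub_le_of_norm_fderiv_le
      (fun w _ => hgd w) hgK' (unitCube_convex _) hx hy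
  have hD2b : ∀ z ∈ unitCube (n-2), ‖fderiv ℝ (fderiv ℝ (f-g)) z‖ ≤ d :=
    fun z hz => le_trans (le_trans (le_max_right _ _) (le_max_right _ _)) (norm_le_c2 hhd2 hz)
  -- d ≤ 4K²
  have h0c : (0 : EuclideanSpace ℝ (Fin (n-2))) ∈ unitCube (n-2) := by
    intro i
    have h0 : (0 : EuclideanSpace ℝ (Fin (n-2))) i = 0 := rfl
    rw [h0, Set.mem_Icc]
    exact ⟨le_refl _, zero_le_one⟩
  have hd4K : d ≤ 4*K^2 := by
    set i0 : Fin (n-2) := ⟨0, hn2⟩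
    have hξn : ‖(EuclideanSpace.single i0 (1:ℝ))‖ = 1 := by
      rw [EuclideanSpace.norm_single]; norm_num
    have hc5 := hlow 0 h0c _ hξn
    have e1 : ‖f 0 - g 0‖ ≤ 2*K := by
      calc ‖f 0 - g 0‖ ≤ ‖f 0‖ + ‖g 0‖ := norm_sub_le _ _
        _ ≤ K + K := add_le_add (hfKp 0 h0c) (hgKp 0 h0c)
        _ = 2*K := by ring
    have e2 : ‖fderiv ℝ f 0 (EuclideanSpace.single i0 1) -
        fderiv ℝ g 0 (EuclideanSpace.single i0 1)‖ ≤ 2*K := by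
      have t1 : ‖fderiv ℝ f 0 (EuclideanSpace.single i0 (1:ℝ))‖ ≤ K := by
        calc _ ≤ ‖fderiv ℝ f 0‖ * ‖(EuclideanSpace.single i0 (1:ℝ))‖ :=
            (fderiv ℝ f 0).le_opNorm _
          _ = ‖fderiv ℝ f 0‖ := by rw [hξn, mul_one]
          _ ≤ K := hfK' 0 h0c
      have t2 : ‖fderiv ℝ g 0 (EuclideanSpace.single i0 (1:ℝ))‖ ≤ K := by
        calc _ ≤ ‖fderiv ℝ g 0‖ * ‖(EuclideanSpace.single i0 (1:ℝ))‖ :=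
            (fderiv ℝ g 0).le_opNorm _
          _ = ‖fderiv ℝ g 0‖ := by rw [hξn, mul_one]
          _ ≤ K := hgK' 0 h0c
      calc _ ≤ ‖fderiv ℝ f 0 (EuclideanSpace.single i0 (1:ℝ))‖ +
          ‖fderiv ℝ g 0 (EuclideanSpace.single i0 (1:ℝ))‖ := norm_sub_le _ _
        _ ≤ 2*K := by linarith
    have e3 : K⁻¹ * d ≤ 4*K := le_trans hc5 (by linarith)
    calc d = K * (K⁻¹ * d) := by field_simp
      _ ≤ K * (4*K) := mul_le_mul_of_nonneg_left e3 hK0.le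
      _ = 4*K^2 := by ring
  -- the near-tangency set Z
  set ZF : Finset (EuclideanSpace ℝ (Fin (n-2))) :=
    hXfFin.toFinset.filter (fun x => ‖f x - g x‖ ≤ (2+2*K)*δ) with hZF
  have habs : ∀ x ∈ ZF, x ∈ Xf ∧ ‖f x - g x‖ ≤ (2+2*K)*δ := by
    intro x hx
    rw [hZF, Finset.mem_filter, Set.Finite.mem_toFinset] at hx
    exact hx
  -- covering of the intersection
  have hsqrtlt : ∀ (u v : ℝ), 0 ≤ u → 0 ≤ v → Real.sqrt (u^2 + v^2) < δ → u < δ ∧ v < δ := by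
    intro u v hu hv hsq
    constructor
    · calc u = Real.sqrt (u^2) := (Real.sqrt_sq hu).symm
        _ ≤ Real.sqrt (u^2+v^2) := Real.sqrt_le_sqrt (by linarith [sq_nonneg v])
        _ < δ := hsq
    · calc v = Real.sqrt (v^2) := (Real.sqrt_sq hv).symm
        _ ≤ Real.sqrt (u^2+v^2) := Real.sqrt_le_sqrt (by linarith [sq_nonneg u])
        _ < δ := hsq
  have hcover : euclNbhd ((fun x => (x, f x)) '' Xf) δ ∩
      euclNbhd ((fun x => (x, g x)) '' Xg) δ ⊆
      ⋃ x ∈ ZF, (Metric.ball x δ ×ˢ Metric.ball (f x) δ) := by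
    rintro p ⟨hp1, hp2⟩
    obtain ⟨q, ⟨x, hxXf, rfl⟩, hq⟩ := hp1
    obtain ⟨q', ⟨y, hyXg, rfl⟩, hq'⟩ := hp2
    have hq1 : Real.sqrt (‖p.1 - x‖^2 + ‖p.2 - f x‖^2) < δ := hq
    have hq2 : Real.sqrt (‖p.1 - y‖^2 + ‖p.2 - g y‖^2) < δ := hq'
    obtain ⟨h1, h2⟩ := hsqrtlt _ _ (norm_nonneg _) (norm_nonneg _) hq1
    obtain ⟨h3, h4⟩ := hsqrtlt _ _ (norm_nonneg _) (norm_nonneg _) hq2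
    have hxc : x ∈ unitCube (n-2) := hXfsub hxXf
    have hyc : y ∈ unitCube (n-2) := hXgsub hyXg
    have hfg : ‖f x - g x‖ ≤ (2+2*K)*δ := by
      have t1 : ‖y - x‖ ≤ ‖y - p.1‖ + ‖p.1 - x‖ := by
        have e : y - x = (y - p.1) + (p.1 - x) := by abel
        rw [e]; exact norm_add_le _ _
      have t2 : ‖g y - g x‖ ≤ K * ‖y - x‖ := hgLip x hxc y hyc
      have t3 : ‖f x - g x‖ ≤ ‖f x - p.2‖ + ‖p.2 - g y‖ + ‖g y - g x‖ := by
        have e : f x - g x = (f x - p.2) + (p.2 - g y) + (g y - g x) := by abel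
        rw [e]; exact norm_add₃_le
      have t4 : ‖f x - p.2‖ = ‖p.2 - f x‖ := norm_sub_rev _ _
      have t5 : ‖y - p.1‖ = ‖p.1 - y‖ := norm_sub_rev _ _
      have t6 : K * ‖y - x‖ ≤ K * (2*δ) := by
        apply mul_le_mul_of_nonneg_left _ hK0.le
        rw [t5] at t1; linarith
      rw [t4] at t3
      linarith
    refine Set.mem_iUnion₂.mpr ⟨x, ?_, ?_⟩
    · rw [hZF, Finset.mem_filter, Set.Finite.mem_toFinset]; exact ⟨hxXf, hfg⟩
    · exact ⟨Metric.mem_ball.mpr (by rw [dist_eq_norm]; exact h1),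
        Metric.mem_ball.mpr (by rw [dist_eq_norm]; exact h2)⟩
  -- volume of each product ball
  have hball : ∀ x : EuclideanSpace ℝ (Fin (n-2)),
      volume (Metric.ball x δ ×ˢ Metric.ball (f x) δ) ≤ ENNReal.ofReal ((2*δ)^(2*n-3)) := by
    intro x
    have hprod : volume (Metric.ball x δ ×ˢ Metric.ball (f x) δ) =
        volume (Metric.ball x δ) * volume (Metric.ball (f x) δ) := by
      rw [← Measure.prod_prod]; rfl
    rw [hprod]
    calc volume (Metric.ball x δ) * volume (Metric.ball (f x) δ)
        ≤ ENNReal.ofReal ((2*δ)^(n-2)) * ENNReal.ofReal ((2*δ)^(n-1)) :=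
          mul_le_mul' (ball_volume_le _ _ hδ.le) (ball_volume_le _ _ hδ.le)
      _ = ENNReal.ofReal ((2*δ)^(2*n-3)) := by
          rw [← ENNReal.ofReal_mul (pow_nonneg (by linarith : (0:ℝ) ≤ 2*δ) _), ← pow_add]
          congr 2
          omega
  have hvol1 : volume (euclNbhd ((fun x => (x, f x)) '' Xf) δ ∩
      euclNbhd ((fun x => (x, g x)) '' Xg) δ) ≤
      (ZF.card : ℝ≥0∞) * ENNReal.ofReal ((2*δ)^(2*n-3)) := by
    calc volume (euclNbhd ((fun x => (x, f x)) '' Xf) δ ∩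
        euclNbhd ((fun x => (x, g x)) '' Xg) δ)
        ≤ volume (⋃ x ∈ ZF, (Metric.ball x δ ×ˢ Metric.ball (f x) δ)) := measure_mono hcover
      _ ≤ ∑ x ∈ ZF, volume (Metric.ball x δ ×ˢ Metric.ball (f x) δ) :=
          measure_biUnion_finset_le _ _
      _ ≤ ∑ _x ∈ ZF, ENNReal.ofReal ((2*δ)^(2*n-3)) :=
          Finset.sum_le_sum (fun x _ => hball x)
      _ = (ZF.card : ℝ≥0∞) * ENNReal.ofReal ((2*δ)^(2*n-3)) := by
          rw [Finset.sum_const, nsmul_eq_mul]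
  -- key counting bound
  have hds : (0:ℝ) < d^s := Real.rpow_pos_of_pos hd s
  have hsn' : s ≤ (n:ℝ) := by
    have : (0:ℝ) ≤ 2 := by norm_num
    linarith
  have h32Ks : (32*K^2 : ℝ) ^ s ≤ (32*K^2 : ℝ)^(n:ℕ) := by
    rw [← Real.rpow_natCast (32*K^2) n]
    exact Real.rpow_le_rpow_of_exponent_le hbase2 hsn'
  have hδε : (1:ℝ) ≤ δ ^ (-ε) :=
    Real.one_le_rpow_of_pos_of_le_one_of_nonpos hδ hδ1 (by linarith)
  have hδε0 : (0:ℝ) ≤ δ ^ (-ε) := by linarith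
  have hkey : (ZF.card : ℝ) ≤ (4*K*Real.sqrt n + 2)^n * (32*K^2)^n * δ^(-ε) / d^s := by
    by_cases hsmall : 16*K^2*δ ≤ d
    · -- transversality case
      set r₁ := 32*K^2*δ/d with hr₁
      have hr₁δ : δ ≤ r₁ := by
        rw [hr₁, le_div_iff₀ hd]; exact arith1 K δ d hK hδ hd4K
      have hr₁0 : 0 < r₁ := lt_of_lt_of_le hδ hr₁δ
      -- separation estimate
      have hsep : ∀ x ∈ ZF, ∀ y ∈ ZF, ‖y - x‖ ≤ 1/(4*K) → ‖y - x‖ ≤ r₁ := by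
        intro x hx y hy htle
        obtain ⟨hxX, hxZ⟩ := habs x hx
        obtain ⟨hyX, hyZ⟩ := habs y hy
        have hxc := hXfsub hxX
        have hyc := hXfsub hyX
        rcases eq_or_ne y x with rfl | hne
        · rw [sub_self, norm_zero]; exact hr₁0.le
        · set t := ‖y - x‖ with htdef
          have ht0 : 0 < t := norm_pos_iff.mpr (sub_ne_zero.mpr hne)
          set ξ := t⁻¹ • (y - x) with hξdef
          have hξ1 : ‖ξ‖ = 1 := by
            rw [hξdef, norm_smul, Real.norm_eq_abs, abs_inv, abs_of_pos ht0, ← htdef,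
              inv_mul_cancel₀ ht0.ne']
          set A := fderiv ℝ (f - g) x with hA
          have hcx := hlow x hxc ξ hξ1
          set a := ‖f x - g x‖ with hadef
          set b := ‖fderiv ℝ f x ξ - fderiv ℝ g x ξ‖ with hbdef
          have hbEq : fderiv ℝ f x ξ - fderiv ℝ g x ξ = A ξ := by
            rw [hA, hDsub x]; rfl
          have hbEq' : ‖A ξ‖ = b := by rw [← hbEq]
          have hyx : y - x = t • ξ := by
            rw [hξdef, smul_smul, mul_inv_cancel₀ ht0.ne', one_smul]
          have hms : A (t • ξ) = t • (A ξ) := A.map_smul t ξ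
          have hnorm_lin : ‖A (y - x)‖ = t * b := by
            rw [hyx, hms, norm_smul, Real.norm_eq_abs, abs_of_pos ht0, hbEq']
          have htay := taylor_bound hhd2 hD2b hxc hyc
          have htri : ‖A (y - x)‖ ≤ ‖(f-g) y - (f-g) x‖ + d * t^2 := by
            have e : A (y - x) =
                ((f-g) y - (f-g) x) - ((f-g) y - (f-g) x - A (y - x)) := by
              abel
            rw [e]
            exact le_trans (norm_sub_le _ _) (by linarith [htay])
          have hsum : ‖(f-g) y - (f-g) x‖ ≤ (4+4*K)*δ := by
            have e1 : ‖(f-g) y‖ = ‖f y - g y‖ := rfl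
            have e2 : ‖(f-g) x‖ = ‖f x - g x‖ := rfl
            calc ‖(f-g) y - (f-g) x‖ ≤ ‖(f-g) y‖ + ‖(f-g) x‖ := norm_sub_le _ _
              _ ≤ (2+2*K)*δ + (2+2*K)*δ := by rw [e1, e2]; exact add_le_add hyZ hxZ
              _ = (4+4*K)*δ := by ring
          have hmul : d ≤ K*a + K*b := by
            have e := mul_le_mul_of_nonneg_left hcx hK0.le
            rw [← mul_assoc, mul_inv_cancel₀ hK0.ne', one_mul] at e
            linarith [e]
          have ha : a ≤ (2+2*K)*δ := hxZ
          have ha0 : 0 ≤ a := norm_nonneg _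
          have hb0 : 0 ≤ b := norm_nonneg _
          have htb : t*b ≤ (4+4*K)*δ + d*t^2 := by
            rw [← hnorm_lin]
            exact le_trans htri (by linarith [hsum])
          have htK : t*(4*K) ≤ 1 := by
            have := (le_div_iff₀ (mul_pos four_pos hK0) ).mp htle
            linarith
          show t ≤ r₁
          rw [hr₁, le_div_iff₀ hd]
          exact arith_sep K δ d t a b hK hδ hd ht0 ha0 hb0 hmul ha htb htK
      -- the grid
      have hmpos : (0:ℝ) < ((n-2:ℕ):ℝ) := by exact_mod_cast hn2
      set N := ⌈4*K*Real.sqrt ((n-2:ℕ):ℝ)⌉₊ with hN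
      have hsqm0 : (0:ℝ) < Real.sqrt ((n-2:ℕ):ℝ) := Real.sqrt_pos.mpr hmpos
      have hN1 : 1 ≤ N := Nat.ceil_pos.mpr (mul_pos (mul_pos four_pos hK0) hsqm0)
      have hNge : 4*K*Real.sqrt ((n-2:ℕ):ℝ) ≤ (N:ℝ) := Nat.le_ceil _
      have hN0 : (0:ℝ) < (N:ℝ) := by exact_mod_cast hN1
      set φm : EuclideanSpace ℝ (Fin (n-2)) → (Fin (n-2) → Fin N) :=
        fun x i => ⟨min ⌊(N:ℝ) * x i⌋₊ (N-1),
          lt_of_le_of_lt (min_le_right _ _) (by omega)⟩ with hφm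
      have hcoord : ∀ z ∈ unitCube (n-2), ∀ i : Fin (n-2),
          ((φm z i : ℕ) : ℝ)/N ≤ z i ∧ z i ≤ (((φm z i : ℕ) : ℝ)+1)/N := by
        intro z hz i
        have hz0 := (hz i).1
        have hz1 := (hz i).2
        have hval : (φm z i : ℕ) = min ⌊(N:ℝ) * z i⌋₊ (N-1) := rfl
        constructor
        · rw [div_le_iff₀ hN0, hval]
          calc ((min ⌊(N:ℝ) * z i⌋₊ (N-1) : ℕ) : ℝ) ≤ ((⌊(N:ℝ) * z i⌋₊ : ℕ) : ℝ) := by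
                exact_mod_cast min_le_left _ _
            _ ≤ (N:ℝ) * z i := Nat.floor_le (by positivity)
            _ = z i * N := by ring
        · rw [le_div_iff₀ hN0, hval]
          by_cases hle : ⌊(N:ℝ) * z i⌋₊ ≤ N-1
          · rw [min_eq_left hle]
            have hlt := Nat.lt_floor_add_one ((N:ℝ) * z i)
            calc z i * (N:ℝ) = (N:ℝ) * z i := by ring
              _ ≤ (↑⌊(N:ℝ) * z i⌋₊ + 1 : ℝ) := hlt.le
          · rw [min_eq_right (by omega : N-1 ≤ ⌊(N:ℝ) * z i⌋₊)]
            have hcast : ((N-1:ℕ):ℝ) + 1 = (N:ℝ) := by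
              have : (1:ℕ) ≤ N := hN1
              push_cast [Nat.cast_sub this]
              ring
            rw [hcast]
            calc z i * (N:ℝ) ≤ 1 * (N:ℝ) := mul_le_mul_of_nonneg_right hz1 hN0.le
              _ = (N:ℝ) := one_mul _
      have hcell : ∀ x ∈ ZF, ∀ y ∈ ZF, φm x = φm y → ‖y - x‖ ≤ 1/(4*K) := by
        intro x hx y hy hxy
        have hxc := hXfsub (habs x hx).1
        have hyc := hXfsub (habs y hy).1
        have hco : ∀ i : Fin (n-2), |y i - x i| ≤ 1/N := by
          intro i
          have h1 := hcoord x hxc i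
          have h2 := hcoord y hyc i
          have heq : ((φm x i : ℕ) : ℝ) = ((φm y i : ℕ) : ℝ) := by rw [hxy]
          have hlen : (((φm x i : ℕ) : ℝ)+1)/N - ((φm x i : ℕ) : ℝ)/N = 1/N := by
            field_simp
            ring
          rw [← heq] at h2
          rw [abs_le]
          constructor <;> [linarith [h1.1, h1.2, h2.1, h2.2]; linarith [h1.1, h1.2, h2.1, h2.2]]
        have hnorm : ‖y - x‖ ≤ Real.sqrt ((n-2:ℕ):ℝ) * (1/N) := by
          rw [EuclideanSpace.norm_eq]
          have hco2 : ∀ i : Fin (n-2), ‖(y - x) i‖^2 ≤ (1/(N:ℝ))^2 := by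
            intro i
            have e : (y - x) i = y i - x i := rfl
            rw [e, Real.norm_eq_abs]
            exact pow_le_pow_left₀ (abs_nonneg _) (hco i) 2
          have hsum : ∑ i, ‖(y - x) i‖^2 ≤ ((n-2:ℕ):ℝ) * (1/N)^2 := by
            calc ∑ i, ‖(y - x) i‖^2 ≤ ∑ _i : Fin (n-2), (1/(N:ℝ))^2 :=
                Finset.sum_le_sum (fun i _ => hco2 i)
              _ = ((n-2:ℕ):ℝ) * (1/N)^2 := by
                  rw [Finset.sum_const, Finset.card_univ, Fintype.card_fin, nsmul_eq_mul]
          calc Real.sqrt (∑ i, ‖(y-x) i‖^2) ≤ Real.sqrt (((n-2:ℕ):ℝ) * (1/N)^2) :=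
              Real.sqrt_le_sqrt hsum
            _ = Real.sqrt ((n-2:ℕ):ℝ) * (1/N) := by
                rw [Real.sqrt_mul hmpos.le, Real.sqrt_sq (by positivity)]
        calc ‖y - x‖ ≤ Real.sqrt ((n-2:ℕ):ℝ) * (1/N) := hnorm
          _ ≤ 1/(4*K) := by
              rw [mul_one_div, div_le_div_iff₀ hN0 (mul_pos four_pos hK0)]
              rw [one_mul, mul_comm]
              exact hNge
      -- fiberwise counting
      have hfib : ∀ c ∈ ZF.image φm,
          ((ZF.filter (fun x => φm x = c)).card : ℝ) ≤ δ^(-ε) * r₁^s * (Xf.ncard:ℝ) := by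
        intro c hc
        obtain ⟨z₀, hz₀, hz₀c⟩ := Finset.mem_image.mp hc
        have hsub2 : ((ZF.filter (fun x => φm x = c)) : Set (EuclideanSpace ℝ (Fin (n-2)))) ⊆
            Xf ∩ Metric.closedBall z₀ r₁ := by
          intro x hx
          rw [Finset.mem_coe, Finset.mem_filter] at hx
          obtain ⟨hxZ, hxφ⟩ := hx
          refine ⟨(habs x hxZ).1, ?_⟩
          rw [Metric.mem_closedBall, dist_eq_norm]
          exact hsep z₀ hz₀ x hxZ (hcell z₀ hz₀ x hxZ (by rw [hz₀c, hxφ]))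
        calc ((ZF.filter (fun x => φm x = c)).card : ℝ)
            = (((ZF.filter (fun x => φm x = c)) : Set (EuclideanSpace ℝ (Fin (n-2)))).ncard : ℝ) := by
              rw [Set.ncard_coe_finset]
          _ ≤ ((Xf ∩ Metric.closedBall z₀ r₁).ncard : ℝ) := by
              exact_mod_cast Set.ncard_le_ncard hsub2 (hXfFin.inter_of_left _)
          _ ≤ δ^(-ε) * r₁^s * Xf.ncard := hXfDelta z₀ r₁ hr₁δ
      have hcard : ZF.card = ∑ c ∈ ZF.image φm, (ZF.filter (fun x => φm x = c)).card :=
        Finset.card_eq_sum_card_fiberwise (fun x hx => Finset.mem_image_of_mem _ hx)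
      have himg : ((ZF.image φm).card : ℝ) ≤ (N:ℝ)^(n-2) := by
        calc ((ZF.image φm).card : ℝ) ≤ (Fintype.card (Fin (n-2) → Fin N) : ℝ) := by
              exact_mod_cast Finset.card_le_univ _
          _ = (N:ℝ)^(n-2) := by
              rw [Fintype.card_fun, Fintype.card_fin, Fintype.card_fin]
              push_cast; ring
      have hB0 : 0 ≤ δ^(-ε) * r₁^s * (Xf.ncard:ℝ) := by
        apply mul_nonneg (mul_nonneg hδε0 (Real.rpow_nonneg hr₁0.le s)) (Nat.cast_nonneg _)
      have hcount : (ZF.card : ℝ) ≤ (N:ℝ)^(n-2) * (δ^(-ε) * r₁^s * (Xf.ncard:ℝ)) := by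
        calc (ZF.card : ℝ) = ∑ c ∈ ZF.image φm, ((ZF.filter (fun x => φm x = c)).card : ℝ) := by
              rw [hcard]; push_cast; ring
          _ ≤ ∑ _c ∈ ZF.image φm, (δ^(-ε) * r₁^s * (Xf.ncard:ℝ)) := Finset.sum_le_sum hfib
          _ = ((ZF.image φm).card : ℝ) * (δ^(-ε) * r₁^s * (Xf.ncard:ℝ)) := by
              rw [Finset.sum_const, nsmul_eq_mul]
          _ ≤ (N:ℝ)^(n-2) * (δ^(-ε) * r₁^s * (Xf.ncard:ℝ)) :=
              mul_le_mul_of_nonneg_right himg hB0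
      -- simplify r₁^s * #Xf
      have hrs : r₁^s * (Xf.ncard:ℝ) ≤ (32*K^2)^n / d^s := by
        have h1 : r₁^s = ((32*K^2:ℝ)^s * δ^s)/d^s := by
          rw [hr₁, Real.div_rpow (mul_nonneg (mul_nonneg (by norm_num) (sq_nonneg K)) hδ.le) hd.le,
            Real.mul_rpow (mul_nonneg (by norm_num) (sq_nonneg K)) hδ.le]
        have h3 : δ^s * δ^(-s) = 1 := by
          rw [← Real.rpow_add hδ]
          simp
        calc r₁^s * (Xf.ncard:ℝ) ≤ r₁^s * δ^(-s) :=
            mul_le_mul_of_nonneg_left hXfCard (Real.rpow_nonneg hr₁0.le s)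
          _ = ((32*K^2:ℝ)^s * (δ^s * δ^(-s)))/d^s := by rw [h1]; ring
          _ = (32*K^2:ℝ)^s/d^s := by rw [h3, mul_one]
          _ ≤ (32*K^2)^n/d^s := by
              rw [div_eq_mul_inv, div_eq_mul_inv]
              exact mul_le_mul_of_nonneg_right h32Ks (inv_nonneg.mpr hds.le)
      -- N^(n-2) ≤ (4K√n+2)^n
      have hNpow : (N:ℝ)^(n-2) ≤ (4*K*Real.sqrt n + 2)^n := by
        have hNle : (N:ℝ) ≤ 4*K*Real.sqrt n + 2 := by
          have t1 : (N:ℝ) < 4*K*Real.sqrt ((n-2:ℕ):ℝ) + 1 :=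
            Nat.ceil_lt_add_one (mul_nonneg (mul_nonneg (by norm_num) hK0.le) hsqm0.le)
          have t2 : Real.sqrt ((n-2:ℕ):ℝ) ≤ Real.sqrt n := by
            apply Real.sqrt_le_sqrt
            exact_mod_cast Nat.sub_le n 2
          have t3 : 4*K*Real.sqrt ((n-2:ℕ):ℝ) ≤ 4*K*Real.sqrt n :=
            mul_le_mul_of_nonneg_left t2 (mul_nonneg (by norm_num) hK0.le)
          calc (N:ℝ) ≤ 4*K*Real.sqrt ((n-2:ℕ):ℝ) + 1 := t1.le
            _ ≤ 4*K*Real.sqrt n + 1 := by linarith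
            _ ≤ 4*K*Real.sqrt n + 2 := by linarith
        calc (N:ℝ)^(n-2) ≤ (4*K*Real.sqrt n + 2)^(n-2) :=
            pow_le_pow_left₀ hN0.le hNle _
          _ ≤ (4*K*Real.sqrt n + 2)^n := pow_le_pow_right₀ hbase1 (Nat.sub_le n 2)
      calc (ZF.card : ℝ) ≤ (N:ℝ)^(n-2) * (δ^(-ε) * r₁^s * (Xf.ncard:ℝ)) := hcount
        _ = (N:ℝ)^(n-2) * δ^(-ε) * (r₁^s * (Xf.ncard:ℝ)) := by ring
        _ ≤ (N:ℝ)^(n-2) * δ^(-ε) * ((32*K^2)^n / d^s) := by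
            apply mul_le_mul_of_nonneg_left hrs
            exact mul_nonneg (pow_nonneg hN0.le _) hδε0
        _ ≤ (4*K*Real.sqrt n + 2)^n * δ^(-ε) * ((32*K^2)^n / d^s) := by
            apply mul_le_mul_of_nonneg_right _
              (div_nonneg (pow_nonneg (mul_nonneg (by norm_num) (sq_nonneg K)) n) hds.le)
            exact mul_le_mul_of_nonneg_right hNpow hδε0
        _ = (4*K*Real.sqrt n + 2)^n * (32*K^2)^n * δ^(-ε) / d^s := by ring
    · -- non-transversal (large δ) case
      push_neg at hsmall
      have c1 : (ZF.card : ℝ) ≤ (Xf.ncard : ℝ) := by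
        have h1 : ZF.card ≤ hXfFin.toFinset.card := Finset.card_filter_le _ _
        have h2 : Xf.ncard = hXfFin.toFinset.card := Set.ncard_eq_toFinset_card _ hXfFin
        rw [h2]
        exact_mod_cast h1
      have c2 : δ ^ (-s) ≤ (16*K^2:ℝ)^s / d^s := by
        have hpos : (0:ℝ) < d/(16*K^2) := div_pos hd (mul_pos (by norm_num) (pow_pos hK0 2))
        have hle : d/(16*K^2) ≤ δ := by
          rw [div_le_iff₀ (mul_pos (by norm_num) (pow_pos hK0 2))]
          calc d ≤ 16*K^2*δ := hsmall.le
            _ = δ*(16*K^2) := by ring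
        calc δ^(-s) ≤ (d/(16*K^2))^(-s) :=
            Real.rpow_le_rpow_of_nonpos hpos hle (by linarith)
          _ = (16*K^2:ℝ)^s / d^s := by
              rw [Real.rpow_neg (le_of_lt hpos), Real.div_rpow hd.le (mul_nonneg (by norm_num) (sq_nonneg K))]
              rw [inv_div]
      have c3 : (16*K^2:ℝ)^s ≤ (32*K^2:ℝ)^s :=
        Real.rpow_le_rpow (mul_nonneg (by norm_num) (sq_nonneg K))
          (mul_le_mul_of_nonneg_right (by norm_num : (16:ℝ) ≤ 32) (sq_nonneg K)) hs.le
      have c4 : (16*K^2:ℝ)^s / d^s ≤ (32*K^2:ℝ)^n / d^s := by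
        rw [div_eq_mul_inv, div_eq_mul_inv]
        exact mul_le_mul_of_nonneg_right (le_trans c3 h32Ks) (inv_nonneg.mpr hds.le)
      have c5 : (ZF.card : ℝ) ≤ (32*K^2:ℝ)^n / d^s :=
        le_trans c1 (le_trans hXfCard (le_trans c2 c4))
      have hone : (1:ℝ) ≤ (4*K*Real.sqrt n + 2)^n * δ^(-ε) := by
        calc (1:ℝ) = 1*1 := by norm_num
          _ ≤ (4*K*Real.sqrt n + 2)^n * δ^(-ε) :=
            mul_le_mul (one_le_pow₀ hbase1) hδε (by norm_num)
              (le_trans zero_le_one (one_le_pow₀ hbase1))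
      calc (ZF.card : ℝ) ≤ (32*K^2:ℝ)^n / d^s := c5
        _ ≤ ((4*K*Real.sqrt n + 2)^n * δ^(-ε)) * ((32*K^2:ℝ)^n / d^s) := by
            have hX0 : (0:ℝ) ≤ (32*K^2:ℝ)^n / d^s :=
              div_nonneg (pow_nonneg (mul_nonneg (by norm_num) (sq_nonneg K)) n) hds.le
            calc (32*K^2:ℝ)^n / d^s = 1 * ((32*K^2:ℝ)^n / d^s) := (one_mul _).symm
              _ ≤ ((4*K*Real.sqrt n + 2)^n * δ^(-ε)) * ((32*K^2:ℝ)^n / d^s) :=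
                mul_le_mul_of_nonneg_right hone hX0
        _ = (4*K*Real.sqrt n + 2)^n * (32*K^2)^n * δ^(-ε) / d^s := by ring
  -- final assembly
  have hfinal : (ZF.card : ℝ) * (2*δ)^(2*n-3) ≤
      2 ^ (2*n-3) * (4*K*Real.sqrt n + 2) ^ n * (32*K^2) ^ n * δ^(-ε) * δ^(2*n-3) / d^s := by
    have h2n3 : (2*δ)^(2*n-3) = 2^(2*n-3) * δ^(2*n-3) := mul_pow 2 δ _
    have hnn : (0:ℝ) ≤ 2^(2*n-3) * δ^(2*n-3) :=
      mul_nonneg (pow_nonneg (by norm_num) _) (pow_nonneg hδ.le _)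
    calc (ZF.card : ℝ) * (2*δ)^(2*n-3)
        = (ZF.card : ℝ) * (2^(2*n-3) * δ^(2*n-3)) := by rw [h2n3]
      _ ≤ ((4*K*Real.sqrt n + 2)^n * (32*K^2)^n * δ^(-ε) / d^s) * (2^(2*n-3) * δ^(2*n-3)) :=
          mul_le_mul_of_nonneg_right hkey hnn
      _ = 2 ^ (2*n-3) * (4*K*Real.sqrt n + 2) ^ n * (32*K^2) ^ n * δ^(-ε) * δ^(2*n-3) / d^s := by
          ring
  calc volume (euclNbhd ((fun x => (x, f x)) '' Xf) δ ∩
      euclNbhd ((fun x => (x, g x)) '' Xg) δ)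
      ≤ (ZF.card : ℝ≥0∞) * ENNReal.ofReal ((2*δ)^(2*n-3)) := hvol1
    _ = ENNReal.ofReal ((ZF.card:ℝ) * (2*δ)^(2*n-3)) := by
        rw [ENNReal.ofReal_mul (Nat.cast_nonneg _), ENNReal.ofReal_natCast]
    _ ≤ ENNReal.ofReal (2 ^ (2*n-3) * (4*K*Real.sqrt n + 2) ^ n * (32*K^2) ^ n * δ^(-ε) * δ^(2*n-3) / d^s) :=
        ENNReal.ofReal_le_ofReal hfinal
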